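/- Let H = Σ_ν E_ν|ν⟩⟨ν| be a Hermitian operator on a finite-dimensional Hilbert space of N sites, let ρ_T = e^{−H/T}/Z(T) be its Gibbs state at temperature T > 0, and define Z(T,e,δ) := Σ_{ν∈M_{e,δ}} e^{−E_ν/T}. Let e ∈ ℝ, δ > 0 with M_{e,δ} ≠ ∅, and let ẽ ∈ ℝ, δ̃ > 0 with M_{ẽ,δ̃} ≠ ∅. Then for every density matrix τ supported on span{|ν⟩ : ν ∈ M_{e,δ}}, S(τ‖ρ_T) ≤ −S(τ) + log( (Z(T)/Z(T,ẽ,δ̃)) · |M_{ẽ,δ̃}| · e^{(eN − ẽN + δ√N + δ̃√N)/T} ). -/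

import Mathlib

open scoped BigOperators Kronecker ComplexOrder

noncomputable section

namespace EquivEnsembles

/-! ### Generic linear-algebraic notions -/

variable {ι : Type*} [Fintype ι] [DecidableEq ι]

/-- The operator norm of a matrix, via its action on Euclidean space. -/
def opNorm (A : Matrix ι ι ℂ) : ℝ := ‖Matrix.toEuclideanCLM (𝕜 := ℂ) A‖

/-- The trace norm `‖A‖₁ = tr √(AᴴA)` of a matrix. -/
def traceNorm (A : Matrix ι ι ℂ) : ℝ :=
  ((((Matrix.posSemidef_conjTranspose_mul_self A).1.eigenvectorUnitary : Matrix ι ι ℂ) *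
    Matrix.diagonal (((↑) : ℝ → ℂ) ∘ (√·) ∘ (Matrix.posSemidef_conjTranspose_mul_self A).1.eigenvalues) *
    (star (Matrix.posSemidef_conjTranspose_mul_self A).1.eigenvectorUnitary : Matrix ι ι ℂ))).trace.re

/-- A density matrix: positive semidefinite with unit trace. -/
def IsDensity (ρ : Matrix ι ι ℂ) : Prop := ρ.PosSemidef ∧ ρ.trace = 1

/-- Functional calculus for (Hermitian) matrices, via the spectral theorem;
junk value `0` on non-Hermitian matrices. -/
def mfun (f : ℝ → ℝ) (A : Matrix ι ι ℂ) : Matrix ι ι ℂ :=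
  if h : A.IsHermitian then
    (h.eigenvectorUnitary : Matrix ι ι ℂ) *
      Matrix.diagonal (fun i => (f (h.eigenvalues i) : ℂ)) *
      (star h.eigenvectorUnitary : Matrix ι ι ℂ)
  else 0

/-- Matrix logarithm, base 2. -/
def mlog2 (A : Matrix ι ι ℂ) : Matrix ι ι ℂ := mfun (Real.logb 2) A

/-- Matrix logarithm, base e. -/
def mln (A : Matrix ι ι ℂ) : Matrix ι ι ℂ := mfun Real.log A

/-- Moore-Penrose pseudoinverse (of a Hermitian matrix; junk value `0` otherwise). -/
def hpinv (A : Matrix ι ι ℂ) : Matrix ι ι ℂ := mfun (fun x => x⁻¹) A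

/-- Quantum relative entropy `S(τ‖ρ) = tr (τ (log τ − log ρ))` (base-2 logarithms). -/
def relEnt (τ ρ : Matrix ι ι ℂ) : ℝ := (τ * (mlog2 τ - mlog2 ρ)).trace.re

/-- Von Neumann entropy (base-2 logarithm). -/
def vnEnt (τ : Matrix ι ι ℂ) : ℝ := -(τ * mlog2 τ).trace.re

/-- Von Neumann entropy (natural logarithm). -/
def vnEntNat (τ : Matrix ι ι ℂ) : ℝ := -(τ * mln τ).trace.re

/-- Max-relative entropy `S_max(τ‖ρ) = min {λ : τ ≤ 2^λ ρ}`. -/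
def smax (τ ρ : Matrix ι ι ℂ) : ℝ :=
  sInf {lam : ℝ | (((2:ℝ) ^ lam) • ρ - τ).PosSemidef}

/-- The Gibbs state `e^{-H/T}/Z(T)` of a Hamiltonian `H` at temperature `T`. -/
def gibbs (H : Matrix ι ι ℂ) (T : ℝ) : Matrix ι ι ℂ :=
  ((NormedSpace.exp ((-(T : ℂ))⁻¹ • H)).trace)⁻¹ • NormedSpace.exp ((-(T : ℂ))⁻¹ • H)

/-- The partition function `Z(T) = tr e^{-H/T}`. -/
def partZ (H : Matrix ι ι ℂ) (T : ℝ) : ℂ := (NormedSpace.exp ((-(T : ℂ))⁻¹ • H)).trace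

/-- Energy density `u(T)` (with `N` sites). -/
def uT (H : Matrix ι ι ℂ) (T : ℝ) (N : ℕ) : ℝ := (H * gibbs H T).trace.re / N

/-- Specific heat capacity `c(T)` (with `N` sites). -/
def cT (H : Matrix ι ι ℂ) (T : ℝ) (N : ℕ) : ℝ :=
  ((H * H * gibbs H T).trace.re - ((H * gibbs H T).trace.re) ^ 2) / (N * T ^ 2)

/-- Entropy density `s(T)` (with `N` sites, natural logarithm). -/
def sT (H : Matrix ι ι ℂ) (T : ℝ) (N : ℕ) : ℝ := vnEntNat (gibbs H T) / N

/-- The rank-one spectral projection `|ν⟩⟨ν|` onto the `ν`-th eigenvector of a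
Hermitian matrix. -/
def eigProj {A : Matrix ι ι ℂ} (hA : A.IsHermitian) (ν : ι) : Matrix ι ι ℂ :=
  (hA.eigenvectorUnitary : Matrix ι ι ℂ) * Matrix.single ν ν 1 *
    (star hA.eigenvectorUnitary : Matrix ι ι ℂ)

/-- The microcanonical index set `M_{e,δ} = {ν : |E_ν − eN| ≤ δ√N}`. -/
def microSet {A : Matrix ι ι ℂ} (hA : A.IsHermitian) (e δ : ℝ) (N : ℕ) : Finset ι :=
  Finset.univ.filter fun ν => |hA.eigenvalues ν - e * N| ≤ δ * Real.sqrt N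

/-- The microcanonical state `τ_{e,δ}`. -/
def microState {A : Matrix ι ι ℂ} (hA : A.IsHermitian) (e δ : ℝ) (N : ℕ) : Matrix ι ι ℂ :=
  (((microSet hA e δ N).card : ℂ))⁻¹ • ∑ ν ∈ microSet hA e δ N, eigProj hA ν

/-- The restricted partition function `Z(T,e,δ) = Σ_{ν ∈ M_{e,δ}} e^{−E_ν/T}`. -/
def partZmicro {A : Matrix ι ι ℂ} (hA : A.IsHermitian) (T e δ : ℝ) (N : ℕ) : ℝ :=
  ∑ ν ∈ microSet hA e δ N, Real.exp (-(hA.eigenvalues ν) / T)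

/-- `τ` is supported on the span of the eigenvectors indexed by `M`. -/
def SupportedOn {A : Matrix ι ι ℂ} (hA : A.IsHermitian) (M : Finset ι)
    (τ : Matrix ι ι ℂ) : Prop :=
  (∑ ν ∈ M, eigProj hA ν) * τ * (∑ ν ∈ M, eigProj hA ν) = τ


/-! ### Many-body systems on a set `V` of sites -/

variable {V : Type*} [Fintype V] [DecidableEq V] {D : ℕ}

/-- Basis configurations of `⊗_{v ∈ V} ℂ^D`. -/
abbrev Cfg (V : Type*) (D : ℕ) := V → Fin D

/-- Basis configurations on a region `X ⊆ V`. -/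
abbrev CfgOn (D : ℕ) {V : Type*} (X : Finset V) := {x : V // x ∈ X} → Fin D

/-- Splitting a configuration into its parts on `X` and on the complement of `X`. -/
def cfgSplit (D : ℕ) (X : Finset V) :
    Cfg V D ≃ ({x : V // x ∈ X} → Fin D) × ({x : V // ¬ x ∈ X} → Fin D) :=
  Equiv.piEquivPiSubtypeProd (fun x => x ∈ X) fun _ => Fin D

/-- The reduced state `ρ_X = tr_{V∖X} ρ` on the region `X`. -/
def reduce (X : Finset V) (ρ : Matrix (Cfg V D) (Cfg V D) ℂ) :
    Matrix (CfgOn D X) (CfgOn D X) ℂ := fun a b =>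
  ∑ h : {x : V // ¬ x ∈ X} → Fin D,
    ρ ((cfgSplit D X).symm (a, h)) ((cfgSplit D X).symm (b, h))

/-- The embedding `P ↦ P ⊗ 𝟙` of an operator on region `X` into the full system. -/
def embed (X : Finset V) (P : Matrix (CfgOn D X) (CfgOn D X) ℂ) :
    Matrix (Cfg V D) (Cfg V D) ℂ :=
  Matrix.submatrix (P ⊗ₖ (1 : Matrix ({x : V // ¬ x ∈ X} → Fin D) ({x : V // ¬ x ∈ X} → Fin D) ℂ))
    (cfgSplit D X) (cfgSplit D X)

/-- An operator acts only on the region `X` if it is of the form `P ⊗ 𝟙`. -/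
def ActsOn (A : Matrix (Cfg V D) (Cfg V D) ℂ) (X : Finset V) : Prop :=
  ∃ P, A = embed X P

/-- The correlation
`cor_ρ(X,Y) = max |tr((P⊗Q)(ρ_{XY} − ρ_X ⊗ ρ_Y))|` over `‖P‖,‖Q‖ ≤ 1` supported on
`X` resp. `Y`; expressed via operators embedded in the full system (for disjoint
`X`, `Y`, `tr((P⊗Q)ρ_{XY}) = tr(P̂ Q̂ ρ)` and `tr((P⊗Q)(ρ_X⊗ρ_Y)) = tr(P̂ρ) tr(Q̂ρ)`). -/
def corr (ρ : Matrix (Cfg V D) (Cfg V D) ℂ) (X Y : Finset V) : ℝ :=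
  sSup {r : ℝ | ∃ (P : Matrix (CfgOn D X) (CfgOn D X) ℂ) (Q : Matrix (CfgOn D Y) (CfgOn D Y) ℂ),
    opNorm P ≤ 1 ∧ opNorm Q ≤ 1 ∧
    r = ‖(embed X P * embed Y Q * ρ).trace -
          (embed X P * ρ).trace * (embed Y Q * ρ).trace‖}

/-- The product state `⊗_{v ∈ V} ρ_v` of single-site states. -/
def prodState (ρs : V → Matrix (Fin D) (Fin D) ℂ) : Matrix (Cfg V D) (Cfg V D) ℂ :=
  fun f g => ∏ v, ρs v (f v) (g v)

/-- The single-site reduced state `ρ_{\{v\}}` as a `D×D` matrix. -/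
def reduce1 (v : V) (ρ : Matrix (Cfg V D) (Cfg V D) ℂ) : Matrix (Fin D) (Fin D) ℂ :=
  fun a b => ∑ h : {x : V // x ≠ v} → Fin D,
    ρ (fun x => if hx : x = v then a else h ⟨x, hx⟩)
      (fun x => if hx : x = v then b else h ⟨x, hx⟩)

/-- The tensor product `⊗_j ρ_j` of states on pairwise disjoint regions `C j`,
as a state on the union of the regions. -/
def tensorOver {M : ℕ} (C : Fin M → Finset V)
    (ρs : ∀ j, Matrix (CfgOn D (C j)) (CfgOn D (C j)) ℂ) :
    Matrix (CfgOn D (Finset.univ.biUnion C)) (CfgOn D (Finset.univ.biUnion C)) ℂ :=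
  fun f g => ∏ j, ρs j
    (fun x => f ⟨x.1, Finset.mem_biUnion.mpr ⟨j, Finset.mem_univ j, x.2⟩⟩)
    (fun x => g ⟨x.1, Finset.mem_biUnion.mpr ⟨j, Finset.mem_univ j, x.2⟩⟩)


/-! ### The lattice `Λ = {1,…,n}^d` -/

/-- A site of the lattice `Λ = {1,…,n}^d`. -/
abbrev Site (d n : ℕ) := Fin d → Fin n

/-- Manhattan distance between two lattice sites. -/
def siteDist {d n : ℕ} (x y : Site d n) : ℕ := ∑ a, ((x a : ℤ) - (y a : ℤ)).natAbs

/-- Distance between two regions of the lattice. -/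
def setDist {d n : ℕ} (X Y : Finset (Site d n)) : ℕ :=
  sInf {m | ∃ x ∈ X, ∃ y ∈ Y, siteDist x y = m}

/-- The ball of radius `k` around site `i` (in Manhattan distance). -/
def ball {d n : ℕ} (i : Site d n) (k : ℕ) : Finset (Site d n) :=
  Finset.univ.filter fun j => siteDist i j ≤ k

/-- The hypercube with edge length `l` and corner `c`. -/
def cube {d n : ℕ} (l : ℕ) (c : Fin d → Fin (n - l + 1)) : Finset (Site d n) :=
  Finset.univ.filter fun x => ∀ a, (c a : ℕ) ≤ (x a : ℕ) ∧ (x a : ℕ) < (c a : ℕ) + l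

/-- The uniform average over all hypercubes of edge length `l` contained in the lattice. -/
def cubeAvg {d n : ℕ} (l : ℕ) (f : Finset (Site d n) → ℝ) : ℝ :=
  (∑ c : Fin d → Fin (n - l + 1), f (cube l c)) / ((n - l + 1) ^ d : ℕ)


/-- The nonnegative real branch of the Lambert `W` function: for `x ≥ 0`,
`W x` is the unique `w ≥ 0` with `w e^w = x`. -/
def lambertW (x : ℝ) : ℝ := sSup {w : ℝ | 0 ≤ w ∧ w * Real.exp w ≤ x}

/-- The quantity `Δ_{k,ξ,z,T}` (with `C` the dimension-dependent constant, `c = c(T)`). -/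
def DeltaBE (C : ℝ) (d k : ℕ) (ξ z T c : ℝ) (N : ℕ) : ℝ :=
  C * (max (k : ℝ) ξ * (z + 1)) ^ (2 * d) / Real.sqrt (T ^ 2 * c) *
    max (1 / (max (k : ℝ) ξ * (z + 1) * Real.log N)) (1 / (T ^ 2 * c))


/-! ### Local Hamiltonians and decaying correlations on the lattice -/

variable {d n D : ℕ}

/-- The state `ρ` has `(ξ,z)`-exponentially decaying correlations. -/
def HasDecay (ρ : Matrix (Cfg (Site d n) D) (Cfg (Site d n) D) ℂ) (ξ z : ℝ) : Prop :=
  ∀ X Y : Finset (Site d n), 0 < setDist X Y →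
    corr ρ X Y ≤ ((n ^ d : ℕ) : ℝ) ^ z * Real.exp (-(setDist X Y : ℝ) / ξ)

/-- The family `Hloc` of local terms is a `k`-local Hamiltonian: each term has norm
at most one and acts only on sites at distance at most `k` from its center. -/
def IsKLocal (Hloc : Site d n → Matrix (Cfg (Site d n) D) (Cfg (Site d n) D) ℂ)
    (k : ℕ) : Prop :=
  ∀ i, opNorm (Hloc i) ≤ 1 ∧ ActsOn (Hloc i) (ball i k)


/-! ### Miscellaneous -/

/-- Reduction of a state on a dependent tensor product `⊗_j H_{A_j}` to the `j`-th factor. -/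
def reduceAt {M : ℕ} {ι : Fin M → Type*} [∀ j, Fintype (ι j)] [∀ j, DecidableEq (ι j)]
    (j : Fin M) (π : Matrix (∀ i, ι i) (∀ i, ι i) ℂ) : Matrix (ι j) (ι j) ℂ :=
  fun a b => ∑ f : ∀ i, ι i, ∑ g : ∀ i, ι i,
    if f j = a ∧ g j = b ∧ ∀ i, i ≠ j → f i = g i then π f g else 0

/-- The tensor product `ρ₁ ⊗ ⋯ ⊗ ρ_M` on a dependent tensor product `⊗_j H_{A_j}`. -/
def prodDep {M : ℕ} {ι : Fin M → Type*} [∀ j, Fintype (ι j)] [∀ j, DecidableEq (ι j)]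
    (ρs : ∀ j, Matrix (ι j) (ι j) ℂ) : Matrix (∀ i, ι i) (∀ i, ι i) ℂ :=
  fun f g => ∏ j, ρs j (f j) (g j)

/-- The pure state `|ψ⟩⟨ψ|` where `ψ = Σ_{ν ∈ M} c_ν |ν⟩` is the vector of the span of
the eigenvectors `{|ν⟩ : ν ∈ M}` with coordinate vector `c`. -/
def pureFromCoords {ι : Type*} [Fintype ι] [DecidableEq ι] {A : Matrix ι ι ℂ}
    (hA : A.IsHermitian) (M : Finset ι) (c : EuclideanSpace ℂ {ν // ν ∈ M}) :
    Matrix ι ι ℂ :=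
  Matrix.vecMulVec
    (fun x => ∑ ν : {ν // ν ∈ M}, c ν * (hA.eigenvectorUnitary : Matrix ι ι ℂ) x ν.1)
    (fun y => starRingEnd ℂ
      (∑ ν : {ν // ν ∈ M}, c ν * (hA.eigenvectorUnitary : Matrix ι ι ℂ) y ν.1))


section AuxStatement15

open Matrix

variable {ι : Type*} [Fintype ι] [DecidableEq ι]

private lemma diag_comm_aux (V : Matrix ι ι ℂ) (d μ : ι → ℝ) (f : ℝ → ℝ)
    (h : V * diagonal (fun i => (d i : ℂ)) = diagonal (fun i => (μ i : ℂ)) * V) :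
    V * diagonal (fun i => (f (d i) : ℂ)) = diagonal (fun i => (f (μ i) : ℂ)) * V := by
  ext i j
  have h' := Matrix.ext_iff.mpr h i j
  rw [Matrix.mul_diagonal, Matrix.diagonal_mul] at h'
  rw [Matrix.mul_diagonal, Matrix.diagonal_mul]
  rcases eq_or_ne (V i j) 0 with h0 | h0
  · simp [h0]
  · rw [mul_comm] at h'
    have hd : ((d j : ℂ)) = (μ i : ℂ) := mul_right_cancel₀ h0 h'
    have hd' : d j = μ i := by exact_mod_cast hd
    rw [hd', mul_comm]

private lemma mfun_unitary_conj (f : ℝ → ℝ) (U : Matrix.unitaryGroup ι ℂ) (d : ι → ℝ) :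
    mfun f ((U : Matrix ι ι ℂ) * diagonal (fun i => (d i : ℂ)) * star (U : Matrix ι ι ℂ)) =
      (U : Matrix ι ι ℂ) * diagonal (fun i => (f (d i) : ℂ)) * star (U : Matrix ι ι ℂ) := by
  have hUU : star (U : Matrix ι ι ℂ) * (U : Matrix ι ι ℂ) = 1 := U.2.1
  have hUU' : (U : Matrix ι ι ℂ) * star (U : Matrix ι ι ℂ) = 1 := U.2.2
  set D : Matrix ι ι ℂ := diagonal (fun i => (d i : ℂ)) with hD
  set A : Matrix ι ι ℂ := (U : Matrix ι ι ℂ) * D * star (U : Matrix ι ι ℂ) with hA'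
  have hDh : Dᴴ = D := by
    rw [hD, diagonal_conjTranspose]
    ext i j
    by_cases h : i = j <;> simp [h, Matrix.diagonal_apply, Complex.conj_ofReal]
  have hA : A.IsHermitian := by
    simp only [Matrix.IsHermitian, hA', conjTranspose_mul, Matrix.star_eq_conjTranspose,
      conjTranspose_conjTranspose, hDh, mul_assoc]
  unfold mfun
  rw [dif_pos hA]
  set W : Matrix ι ι ℂ := (hA.eigenvectorUnitary : Matrix ι ι ℂ) with hW
  have hWW : star W * W = 1 := hA.eigenvectorUnitary.2.1
  have hWW' : W * star W = 1 := hA.eigenvectorUnitary.2.2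
  set μ := hA.eigenvalues with hμ
  have hspec : A = W * diagonal (fun i => (μ i : ℂ)) * star W := hA.spectral_theorem
  have hrel : (star W * (U : Matrix ι ι ℂ)) * D
      = diagonal (fun i => (μ i : ℂ)) * (star W * (U : Matrix ι ι ℂ)) := by
    calc (star W * (U : Matrix ι ι ℂ)) * D
        = star W * ((U : Matrix ι ι ℂ) * D * star (U : Matrix ι ι ℂ)) * (U : Matrix ι ι ℂ) := by
          simp only [mul_assoc, hUU, mul_one]
      _ = star W * (W * diagonal (fun i => (μ i : ℂ)) * star W) * (U : Matrix ι ι ℂ) := by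
          rw [← hA', hspec]
      _ = (star W * W) * (diagonal (fun i => (μ i : ℂ)) * (star W * (U : Matrix ι ι ℂ))) := by
          simp only [mul_assoc]
      _ = diagonal (fun i => (μ i : ℂ)) * (star W * (U : Matrix ι ι ℂ)) := by
          rw [hWW, one_mul]
  have hrel2 := diag_comm_aux (star W * (U : Matrix ι ι ℂ)) d μ f hrel
  have e1 : W * ((star W * (U : Matrix ι ι ℂ)) * diagonal (fun i => (f (d i) : ℂ)))
        * star (U : Matrix ι ι ℂ)
      = (U : Matrix ι ι ℂ) * diagonal (fun i => (f (d i) : ℂ)) * star (U : Matrix ι ι ℂ) := by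
    rw [← mul_assoc, ← mul_assoc, hWW', one_mul]
  have e2 : W * (diagonal (fun i => (f (μ i) : ℂ)) * (star W * (U : Matrix ι ι ℂ)))
        * star (U : Matrix ι ι ℂ)
      = W * diagonal (fun i => (f (μ i) : ℂ)) * star W := by
    simp only [mul_assoc, hUU', mul_one]
  rw [← e2, ← hrel2, e1]

private lemma exp_smul_spectral (H : Matrix ι ι ℂ) (hH : H.IsHermitian) (T : ℝ) (hT : 0 < T) :
    NormedSpace.exp ((-(T : ℂ))⁻¹ • H)
      = (hH.eigenvectorUnitary : Matrix ι ι ℂ) *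
          diagonal (fun ν => ((Real.exp (-(hH.eigenvalues ν) / T) : ℝ) : ℂ)) *
          star (hH.eigenvectorUnitary : Matrix ι ι ℂ) := by
  set W : Matrix ι ι ℂ := (hH.eigenvectorUnitary : Matrix ι ι ℂ) with hW
  have hWW : star W * W = 1 := hH.eigenvectorUnitary.2.1
  have hinv : W⁻¹ = star W := Matrix.inv_eq_left_inv hWW
  have hu : IsUnit W := (Matrix.isUnit_iff_isUnit_det W).mpr
    (Matrix.UnitaryGroup.det_isUnit hH.eigenvectorUnitary)
  have hspec : H = W * diagonal (fun i => (hH.eigenvalues i : ℂ)) * star W :=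
    hH.spectral_theorem
  have hH' : (-(T : ℂ))⁻¹ • H
      = W * diagonal ((-(T : ℂ))⁻¹ • fun i => (hH.eigenvalues i : ℂ)) * star W := by
    rw [Matrix.diagonal_smul, mul_smul_comm, smul_mul_assoc, ← hspec]
  have harg : NormedSpace.exp ((-(T : ℂ))⁻¹ • fun i => (hH.eigenvalues i : ℂ))
      = fun ν => ((Real.exp (-(hH.eigenvalues ν) / T) : ℝ) : ℂ) := by
    rw [Pi.exp_def]
    funext ν
    simp only [Pi.smul_apply, smul_eq_mul]
    have hc : (-(T : ℂ))⁻¹ * (hH.eigenvalues ν : ℂ)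
        = ((-(hH.eigenvalues ν) / T : ℝ) : ℂ) := by
      push_cast
      rw [inv_neg, neg_mul, neg_div, div_eq_inv_mul]
    rw [hc, ← Complex.exp_eq_exp_ℂ, Complex.ofReal_exp]
  rw [hH', ← hinv, Matrix.exp_conj W _ hu, Matrix.exp_diagonal, hinv, harg]

private lemma gibbs_spectral (H : Matrix ι ι ℂ) (hH : H.IsHermitian) (T : ℝ) (hT : 0 < T)
    [Nonempty ι] :
    partZ H T = ((∑ κ, Real.exp (-(hH.eigenvalues κ) / T) : ℝ) : ℂ) ∧
    gibbs H T = (hH.eigenvectorUnitary : Matrix ι ι ℂ) *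
        diagonal (fun ν => ((Real.exp (-(hH.eigenvalues ν) / T)
            / ∑ κ, Real.exp (-(hH.eigenvalues κ) / T) : ℝ) : ℂ)) *
        star (hH.eigenvectorUnitary : Matrix ι ι ℂ) := by
  set W : Matrix ι ι ℂ := (hH.eigenvectorUnitary : Matrix ι ι ℂ) with hW
  have hWW : star W * W = 1 := hH.eigenvectorUnitary.2.1
  set Zr : ℝ := ∑ κ, Real.exp (-(hH.eigenvalues κ) / T) with hZr
  have hZrpos : 0 < Zr := Finset.sum_pos (fun _ _ => Real.exp_pos _) Finset.univ_nonempty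
  have hexp := exp_smul_spectral H hH T hT
  have htr : (NormedSpace.exp ((-(T : ℂ))⁻¹ • H)).trace = (Zr : ℂ) := by
    rw [hexp, Matrix.trace_mul_cycle, hWW, one_mul, Matrix.trace_diagonal, hZr]
    norm_cast
  refine ⟨htr, ?_⟩
  have hdiag : diagonal (fun ν => ((Real.exp (-(hH.eigenvalues ν) / T) / Zr : ℝ) : ℂ))
      = (Zr : ℂ)⁻¹ • diagonal (fun ν => ((Real.exp (-(hH.eigenvalues ν) / T) : ℝ) : ℂ)) := by
    have hvec : (fun ν => ((Real.exp (-(hH.eigenvalues ν) / T) / Zr : ℝ) : ℂ))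
        = (Zr : ℂ)⁻¹ • fun ν => ((Real.exp (-(hH.eigenvalues ν) / T) : ℝ) : ℂ) := by
      funext ν
      rw [Pi.smul_apply, smul_eq_mul]
      push_cast
      ring
    rw [hvec, Matrix.diagonal_smul]
  unfold gibbs
  rw [htr, hexp, hdiag, mul_smul_comm, smul_mul_assoc]

end AuxStatement15

/-- Eq. (40) in the proof of Lemma 7: a bound on the relative entropy
to the Gibbs state of any state supported on the microcanonical subspace, in terms of
a restricted partition function. -/
theorem statement_15 {ι : Type*} [Fintype ι] [DecidableEq ι]
    (N : ℕ) (hN : 1 ≤ N)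
    (H : Matrix ι ι ℂ) (hH : H.IsHermitian) (T : ℝ) (hT : 0 < T)
    (e δ et δt : ℝ) (hδ : 0 < δ) (hδt : 0 < δt)
    (hM : (microSet hH e δ N).Nonempty) (hMt : (microSet hH et δt N).Nonempty)
    (τ : Matrix ι ι ℂ) (hτ : IsDensity τ)
    (hsupp : SupportedOn hH (microSet hH e δ N) τ) :
    relEnt τ (gibbs H T)
      ≤ -vnEnt τ + Real.logb 2 ((partZ H T).re / partZmicro hH T et δt N
          * ((microSet hH et δt N).card : ℝ)
          * Real.exp ((e * N - et * N + δ * Real.sqrt N + δt * Real.sqrt N) / T)) := by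
  classical
  obtain ⟨ν₀, hν₀⟩ := id hM
  haveI : Nonempty ι := ⟨ν₀⟩
  obtain ⟨hZC, hgibbs⟩ := gibbs_spectral H hH T hT
  set W : Matrix ι ι ℂ := (hH.eigenvectorUnitary : Matrix ι ι ℂ) with hW
  have hWW : star W * W = 1 := hH.eigenvectorUnitary.2.1
  have hWW' : W * star W = 1 := hH.eigenvectorUnitary.2.2
  set Zr : ℝ := ∑ κ, Real.exp (-(hH.eigenvalues κ) / T) with hZr
  have hZrpos : 0 < Zr := Finset.sum_pos (fun _ _ => Real.exp_pos _) Finset.univ_nonempty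
  set g : ι → ℝ := fun ν => Real.exp (-(hH.eigenvalues ν) / T) / Zr with hg
  set L : ι → ℝ := fun ν => Real.logb 2 (g ν) with hL
  have hmlog : mlog2 (gibbs H T)
      = W * Matrix.diagonal (fun ν => (L ν : ℂ)) * star W := by
    show mfun (Real.logb 2) (gibbs H T) = _
    rw [hgibbs]
    exact mfun_unitary_conj (Real.logb 2) hH.eigenvectorUnitary g
  set σ : Matrix ι ι ℂ := star W * τ * W with hσdef
  -- trace formula
  have htr2 : (τ * mlog2 (gibbs H T)).trace
      = ∑ ν, σ ν ν * (L ν : ℂ) := by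
    rw [hmlog]
    have c1 : (τ * (W * Matrix.diagonal (fun ν => (L ν : ℂ)) * star W)).trace
        = (σ * Matrix.diagonal (fun ν => (L ν : ℂ))).trace := by
      rw [← mul_assoc, Matrix.trace_mul_comm, hσdef]
      congr 1
      simp only [mul_assoc]
    rw [c1]
    simp [Matrix.trace, Matrix.diag, Matrix.mul_diagonal]
  have htr2re : (τ * mlog2 (gibbs H T)).trace.re = ∑ ν, (σ ν ν).re * L ν := by
    rw [htr2, Complex.re_sum]
    refine Finset.sum_congr rfl fun ν _ => ?_
    simp [Complex.mul_re]
  have hrelEq : relEnt τ (gibbs H T)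
      = -vnEnt τ - (τ * mlog2 (gibbs H T)).trace.re := by
    rw [relEnt, vnEnt, mul_sub, Matrix.trace_sub, Complex.sub_re]
    ring
  -- properties of σ
  have hσpsd : σ.PosSemidef := by
    rw [hσdef, Matrix.star_eq_conjTranspose]
    exact hτ.1.conjTranspose_mul_mul_same W
  have hs0 : ∀ ν, 0 ≤ (σ ν ν).re := by
    intro ν
    have h := hσpsd.re_dotProduct_nonneg (Pi.single ν 1)
    simpa [dotProduct, Matrix.mulVec, Pi.single_apply, mul_ite, ite_mul,
      Finset.sum_ite_eq', Finset.sum_ite_eq] using h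
  have hsum1 : ∑ ν, (σ ν ν).re = 1 := by
    have htrσ : σ.trace = 1 := by
      rw [hσdef, Matrix.trace_mul_cycle, hWW', one_mul, hτ.2]
    have h := congrArg Complex.re htrσ
    simpa [Matrix.trace, Matrix.diag, Complex.re_sum] using h
  -- support of σ
  have hsupp' : (∑ ν ∈ microSet hH e δ N, eigProj hH ν) * τ
      * (∑ ν ∈ microSet hH e δ N, eigProj hH ν) = τ := hsupp
  have hdiagsum : ∑ ν ∈ microSet hH e δ N, Matrix.single ν ν (1 : ℂ)
      = Matrix.diagonal (fun ν => if ν ∈ microSet hH e δ N then (1 : ℂ) else 0) := by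
    ext i j
    rw [Matrix.sum_apply]
    by_cases hij : i = j
    · subst hij
      rw [Matrix.diagonal_apply_eq]
      simp only [Matrix.single, Matrix.of_apply, and_self]
      rw [Finset.sum_ite_eq' (microSet hH e δ N) i (fun _ => (1 : ℂ))]
    · rw [Matrix.diagonal_apply_ne _ hij]
      apply Finset.sum_eq_zero
      intro ν _
      simp only [Matrix.single, Matrix.of_apply]
      rw [if_neg]
      rintro ⟨rfl, rfl⟩
      exact hij rfl
  have hP : (∑ ν ∈ microSet hH e δ N, eigProj hH ν)
      = W * Matrix.diagonal (fun ν => if ν ∈ microSet hH e δ N then (1 : ℂ) else 0)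
        * star W := by
    rw [← hdiagsum, Finset.mul_sum, Finset.sum_mul]
    exact Finset.sum_congr rfl fun ν _ => rfl
  have hsuppσ : ∀ ν, ν ∉ microSet hH e δ N → σ ν ν = 0 := by
    have h1 : star W * (∑ ν ∈ microSet hH e δ N, eigProj hH ν)
        = Matrix.diagonal (fun ν => if ν ∈ microSet hH e δ N then (1 : ℂ) else 0)
          * star W := by
      rw [hP]
      calc star W * (W * Matrix.diagonal
              (fun ν => if ν ∈ microSet hH e δ N then (1 : ℂ) else 0) * star W)
          = (star W * W) * (Matrix.diagonal
              (fun ν => if ν ∈ microSet hH e δ N then (1 : ℂ) else 0) * star W) := by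
            simp only [mul_assoc]
        _ = _ := by rw [hWW, one_mul]
    have h2 : (∑ ν ∈ microSet hH e δ N, eigProj hH ν) * W
        = W * Matrix.diagonal (fun ν => if ν ∈ microSet hH e δ N then (1 : ℂ) else 0) := by
      rw [hP]
      calc W * Matrix.diagonal
              (fun ν => if ν ∈ microSet hH e δ N then (1 : ℂ) else 0) * star W * W
          = W * Matrix.diagonal
              (fun ν => if ν ∈ microSet hH e δ N then (1 : ℂ) else 0) * (star W * W) := by
            simp only [mul_assoc]
        _ = _ := by rw [hWW, mul_one]
    have hσχ : σ = Matrix.diagonal (fun ν => if ν ∈ microSet hH e δ N then (1 : ℂ) else 0)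
        * σ * Matrix.diagonal (fun ν => if ν ∈ microSet hH e δ N then (1 : ℂ) else 0) := by
      conv_lhs => rw [hσdef, ← hsupp']
      calc star W * ((∑ ν ∈ microSet hH e δ N, eigProj hH ν) * τ
              * (∑ ν ∈ microSet hH e δ N, eigProj hH ν)) * W
          = (star W * (∑ ν ∈ microSet hH e δ N, eigProj hH ν)) * τ
              * ((∑ ν ∈ microSet hH e δ N, eigProj hH ν) * W) := by
            simp only [mul_assoc]
        _ = (Matrix.diagonal (fun ν => if ν ∈ microSet hH e δ N then (1 : ℂ) else 0) * star W)
              * τ * (W * Matrix.diagonal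
                (fun ν => if ν ∈ microSet hH e δ N then (1 : ℂ) else 0)) := by
            rw [h1, h2]
        _ = _ := by rw [hσdef]; simp only [mul_assoc]
    intro ν hν
    have h := Matrix.ext_iff.mpr hσχ ν ν
    rw [Matrix.mul_diagonal, Matrix.diagonal_mul] at h
    rw [h]
    simp [hν]
  -- eigenvalue bounds
  have hEub : ∀ ν ∈ microSet hH e δ N,
      hH.eigenvalues ν ≤ e * N + δ * Real.sqrt N := by
    intro ν hν
    have hν' : ν ∈ Finset.univ.filter
        (fun ν => |hH.eigenvalues ν - e * N| ≤ δ * Real.sqrt N) := hν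
    have h := (Finset.mem_filter.mp hν').2
    have := (abs_le.mp h).2
    linarith
  have hElb : ∀ ν ∈ microSet hH et δt N,
      et * N - δt * Real.sqrt N ≤ hH.eigenvalues ν := by
    intro ν hν
    have hν' : ν ∈ Finset.univ.filter
        (fun ν => |hH.eigenvalues ν - et * N| ≤ δt * Real.sqrt N) := hν
    have h := (Finset.mem_filter.mp hν').2
    have := (abs_le.mp h).1
    linarith
  -- the per-eigenvalue bound
  have hLbound : ∀ ν ∈ microSet hH e δ N,
      -(L ν) ≤ Real.logb 2 (Zr * Real.exp ((e * N + δ * Real.sqrt N) / T)) := by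
    intro ν hν
    have hinvg : (g ν)⁻¹ = Zr * Real.exp (hH.eigenvalues ν / T) := by
      rw [hg]
      simp only []
      rw [inv_div, neg_div, Real.exp_neg, div_eq_mul_inv, inv_inv]
    have hLν : -(L ν) = Real.logb 2 (Zr * Real.exp (hH.eigenvalues ν / T)) := by
      rw [hL]
      simp only []
      rw [← Real.logb_inv, hinvg]
    rw [hLν]
    apply Real.logb_le_logb_of_le one_lt_two (by positivity)
    have hdiv : hH.eigenvalues ν / T ≤ (e * N + δ * Real.sqrt N) / T := by
      have := hEub ν hν
      gcongr
    exact mul_le_mul_of_nonneg_left (Real.exp_le_exp.mpr hdiv) hZrpos.le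
  -- step 1
  have hstep1 : -(τ * mlog2 (gibbs H T)).trace.re
      ≤ Real.logb 2 (Zr * Real.exp ((e * N + δ * Real.sqrt N) / T)) := by
    rw [htr2re]
    have h1 : -(∑ ν, (σ ν ν).re * L ν) = ∑ ν, (σ ν ν).re * -(L ν) := by
      rw [← neg_one_mul, Finset.mul_sum]
      exact Finset.sum_congr rfl fun ν _ => by ring
    rw [h1]
    calc ∑ ν, (σ ν ν).re * -(L ν)
        ≤ ∑ ν : ι, (σ ν ν).re
            * Real.logb 2 (Zr * Real.exp ((e * N + δ * Real.sqrt N) / T)) := by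
          apply Finset.sum_le_sum
          intro ν _
          by_cases hν : ν ∈ microSet hH e δ N
          · exact mul_le_mul_of_nonneg_left (hLbound ν hν) (hs0 ν)
          · simp [hsuppσ ν hν]
      _ = Real.logb 2 (Zr * Real.exp ((e * N + δ * Real.sqrt N) / T)) := by
          rw [← Finset.sum_mul, hsum1, one_mul]
  -- step 2: compare with the restricted partition function
  have hZtdef : partZmicro hH T et δt N
      = ∑ ν ∈ microSet hH et δt N, Real.exp (-(hH.eigenvalues ν) / T) := rfl
  have hZtpos : 0 < partZmicro hH T et δt N := by
    rw [hZtdef]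
    exact Finset.sum_pos (fun _ _ => Real.exp_pos _) hMt
  have hcardpos : 0 < ((microSet hH et δt N).card : ℝ) := by
    exact_mod_cast Finset.card_pos.mpr hMt
  have hkey2 : partZmicro hH T et δt N
      ≤ ((microSet hH et δt N).card : ℝ)
        * Real.exp ((δt * Real.sqrt N - et * N) / T) := by
    rw [hZtdef]
    calc ∑ ν ∈ microSet hH et δt N, Real.exp (-(hH.eigenvalues ν) / T)
        ≤ ∑ _ν ∈ microSet hH et δt N,
            Real.exp ((δt * Real.sqrt N - et * N) / T) := by
          apply Finset.sum_le_sum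
          intro ν hν
          apply Real.exp_le_exp.mpr
          have h2 : -(hH.eigenvalues ν) ≤ δt * Real.sqrt N - et * N := by
            have := hElb ν hν
            linarith
          gcongr
      _ = _ := by rw [Finset.sum_const, nsmul_eq_mul]
  have hZre : (partZ H T).re = Zr := by rw [hZC]; exact Complex.ofReal_re _
  have hexp_split : Real.exp ((e * N - et * N + δ * Real.sqrt N + δt * Real.sqrt N) / T)
      = Real.exp ((e * N + δ * Real.sqrt N) / T)
        * Real.exp ((δt * Real.sqrt N - et * N) / T) := by
    rw [← Real.exp_add, ← add_div]
    congr 1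
    ring
  have hR : Zr * Real.exp ((e * N + δ * Real.sqrt N) / T)
      ≤ Zr / partZmicro hH T et δt N * ((microSet hH et δt N).card : ℝ)
        * Real.exp ((e * N - et * N + δ * Real.sqrt N + δt * Real.sqrt N) / T) := by
    rw [hexp_split]
    calc Zr * Real.exp ((e * N + δ * Real.sqrt N) / T)
        = Zr / partZmicro hH T et δt N
            * (partZmicro hH T et δt N * Real.exp ((e * N + δ * Real.sqrt N) / T)) := by
          field_simp
      _ ≤ Zr / partZmicro hH T et δt N
            * (((microSet hH et δt N).card : ℝ)
              * Real.exp ((δt * Real.sqrt N - et * N) / T)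
              * Real.exp ((e * N + δ * Real.sqrt N) / T)) := by
          apply mul_le_mul_of_nonneg_left _ (by positivity)
          exact mul_le_mul_of_nonneg_right hkey2 (Real.exp_pos _).le
      _ = Zr / partZmicro hH T et δt N * ((microSet hH et δt N).card : ℝ)
            * (Real.exp ((e * N + δ * Real.sqrt N) / T)
              * Real.exp ((δt * Real.sqrt N - et * N) / T)) := by
          ring
  have hfinal : Real.logb 2 (Zr * Real.exp ((e * N + δ * Real.sqrt N) / T))
      ≤ Real.logb 2 (Zr / partZmicro hH T et δt N * ((microSet hH et δt N).card : ℝ)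
          * Real.exp ((e * N - et * N + δ * Real.sqrt N + δt * Real.sqrt N) / T)) :=
    Real.logb_le_logb_of_le one_lt_two (by positivity) hR
  rw [hrelEq, hZre]
  have hmain := hstep1.trans hfinal
  linarith
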